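/- For every ℓ ∈ [0, 1], the thermodynamic nonlocal-magic density 𝒥(ℓ) = −(1/(2π)) ∫₀^{x̃} log(1 − x + x²) · √((x̃ − x)/x)/(1 − x) dx, with x̃ = 4ℓ(1 − ℓ), satisfies 𝒥(ℓ) ≤ 𝒥(1/2) = log(8 − 4√3); i.e. the average nonlocal magic density of the Gaussian Haar ensemble is maximal at the symmetric bipartition. -/

import Mathlib

open Real intervalIntegral

/-- The thermodynamic nonlocal-magic density of the Gaussian Haar ensemble at
bipartition fraction ℓ, with x̃ = 4ℓ(1−ℓ). -/
noncomputable def nonlocalMagicDensity (ℓ : ℝ) : ℝ :=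
  -(1 / (2 * Real.pi)) *
    ∫ x in (0 : ℝ)..(4 * ℓ * (1 - ℓ)),
      Real.log (1 - x + x ^ 2) * (Real.sqrt ((4 * ℓ * (1 - ℓ) - x) / x) / (1 - x))

namespace NonlocalMagicAux

noncomputable def G (b x : ℝ) : ℝ :=
  Real.log (1 - x + x ^ 2) * (Real.sqrt ((b - x) / x) / (1 - x))

lemma log_nonpos_aux {x : ℝ} (hx0 : 0 ≤ x) (hx1 : x ≤ 1) :
    Real.log (1 - x + x ^ 2) ≤ 0 := by
  apply Real.log_nonpos <;> nlinarith

lemma log_abs_bound {x : ℝ} (hx0 : 0 ≤ x) (hx1 : x ≤ 1) :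
    |Real.log (1 - x + x ^ 2)| ≤ 2 * (x * (1 - x)) := by
  have hu0 : 0 ≤ x * (1 - x) := by nlinarith
  have hu4 : x * (1 - x) ≤ 1 / 4 := by nlinarith [sq_nonneg (2 * x - 1)]
  have hpos : (0 : ℝ) < 1 - x + x ^ 2 := by nlinarith
  rw [abs_of_nonpos (log_nonpos_aux hx0 hx1)]
  have h1 : -Real.log (1 - x + x ^ 2) = Real.log ((1 - x + x ^ 2)⁻¹) := by
    rw [Real.log_inv]
  rw [h1]
  have h2 : Real.log ((1 - x + x ^ 2)⁻¹) ≤ (1 - x + x ^ 2)⁻¹ - 1 :=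
    Real.log_le_sub_one_of_pos (by positivity)
  have h3 : (1 - x + x ^ 2)⁻¹ - 1 ≤ 2 * (x * (1 - x)) := by
    rw [inv_eq_one_div, div_sub' (ne_of_gt hpos), div_le_iff₀ hpos]
    nlinarith
  linarith

lemma sqrt_factor_nonneg {b x : ℝ} (hx1 : x ≤ 1) :
    0 ≤ Real.sqrt ((b - x) / x) / (1 - x) :=
  div_nonneg (Real.sqrt_nonneg _) (by linarith)

lemma G_nonpos {b x : ℝ} (hx0 : 0 ≤ x) (hx1 : x ≤ 1) : G b x ≤ 0 :=
  mul_nonpos_of_nonpos_of_nonneg (log_nonpos_aux hx0 hx1) (sqrt_factor_nonneg hx1)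

lemma sqrt_factor_mono {b x : ℝ} (hb : b ≤ 1) (hx0 : 0 ≤ x) (hx1 : x ≤ 1) :
    Real.sqrt ((b - x) / x) / (1 - x) ≤ Real.sqrt ((1 - x) / x) / (1 - x) := by
  have h : Real.sqrt ((b - x) / x) ≤ Real.sqrt ((1 - x) / x) := by
    apply Real.sqrt_le_sqrt
    rcases eq_or_lt_of_le hx0 with h0 | h0
    · simp [← h0]
    · exact (div_le_div_iff_of_pos_right h0).mpr (by linarith)
  rcases eq_or_lt_of_le hx1 with h1 | h1
  · simp [← h1]
  · exact (div_le_div_iff_of_pos_right (by linarith)).mpr h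

lemma G_mono {b x : ℝ} (hb : b ≤ 1) (hx0 : 0 ≤ x) (hx1 : x ≤ 1) :
    G 1 x ≤ G b x := by
  have := sqrt_factor_mono hb hx0 hx1
  have hlog := log_nonpos_aux hx0 hx1
  unfold G
  nlinarith [mul_nonneg (neg_nonneg.mpr hlog) (sub_nonneg.mpr this)]

/-- The key uniform bound `|G b x| ≤ 2 √x √(1-x)` on `[0,1]`, for `b ≤ 1`. -/
lemma G_abs_bound {b x : ℝ} (hb : b ≤ 1) (hx0 : 0 ≤ x) (hx1 : x ≤ 1) :
    |G b x| ≤ 2 * (Real.sqrt x * Real.sqrt (1 - x)) := by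
  rcases eq_or_lt_of_le hx0 with h0 | h0
  · rw [← h0]
    norm_num [G]
  rcases eq_or_lt_of_le hx1 with h1 | h1
  · rw [h1]
    norm_num [G]
  have hs1 : (0 : ℝ) < 1 - x := by linarith
  have hnn := sqrt_factor_nonneg (b := b) (x := x) hx1
  have hsx : Real.sqrt x * Real.sqrt x = x := Real.mul_self_sqrt h0.le
  have key : 2 * (x * (1 - x)) * (Real.sqrt ((1 - x) / x) / (1 - x))
      = 2 * (Real.sqrt x * Real.sqrt (1 - x)) := by
    rw [Real.sqrt_div hs1.le x, div_div]
    have hsqx : Real.sqrt x ≠ 0 := by positivity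
    field_simp
    linear_combination (-1 : ℝ) *
      Real.sq_sqrt h0.le
  calc |G b x| = |Real.log (1 - x + x ^ 2)| * (Real.sqrt ((b - x) / x) / (1 - x)) := by
        rw [G, abs_mul, abs_of_nonneg hnn]
    _ ≤ 2 * (x * (1 - x)) * (Real.sqrt ((1 - x) / x) / (1 - x)) :=
        mul_le_mul (log_abs_bound hx0 hx1) (sqrt_factor_mono hb hx0 hx1) hnn (by positivity)
    _ = 2 * (Real.sqrt x * Real.sqrt (1 - x)) := key

lemma G_continuousOn {b : ℝ} (hb : b ≤ 1) : ContinuousOn (G b) (Set.Icc 0 1) := by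
  intro x hx
  obtain ⟨hx0, hx1⟩ := hx
  rcases eq_or_lt_of_le hx0 with h0 | h0
  · -- continuity (within) at 0 by squeezing
    rw [← h0]
    have hG0 : G b 0 = 0 := by norm_num [G]
    rw [ContinuousWithinAt, hG0]
    apply squeeze_zero_norm' (a := fun y => 2 * Real.sqrt y)
    · filter_upwards [self_mem_nhdsWithin] with y hy
      obtain ⟨hy0, hy1⟩ := hy
      calc ‖G b y‖ = |G b y| := rfl
        _ ≤ 2 * (Real.sqrt y * Real.sqrt (1 - y)) := G_abs_bound hb hy0 hy1
        _ ≤ 2 * (Real.sqrt y * 1) := by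
            have : Real.sqrt (1 - y) ≤ 1 := Real.sqrt_le_one.mpr (by linarith)
            nlinarith [Real.sqrt_nonneg y]
        _ = 2 * Real.sqrt y := by ring
    · have : Filter.Tendsto (fun y : ℝ => 2 * Real.sqrt y) (nhds 0) (nhds (2 * Real.sqrt 0)) :=
        (Real.continuous_sqrt.tendsto 0).const_mul 2
      simpa using this.mono_left nhdsWithin_le_nhds
  rcases eq_or_lt_of_le hx1 with h1 | h1
  · -- continuity (within) at 1 by squeezing
    rw [h1]
    have hG1 : G b 1 = 0 := by norm_num [G]
    rw [ContinuousWithinAt, hG1]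
    apply squeeze_zero_norm' (a := fun y => 2 * Real.sqrt (1 - y))
    · filter_upwards [self_mem_nhdsWithin] with y hy
      obtain ⟨hy0, hy1⟩ := hy
      calc ‖G b y‖ = |G b y| := rfl
        _ ≤ 2 * (Real.sqrt y * Real.sqrt (1 - y)) := G_abs_bound hb hy0 hy1
        _ ≤ 2 * (1 * Real.sqrt (1 - y)) := by
            have : Real.sqrt y ≤ 1 := Real.sqrt_le_one.mpr (by linarith)
            nlinarith [Real.sqrt_nonneg (1 - y)]
        _ = 2 * Real.sqrt (1 - y) := by ring
    · have : Filter.Tendsto (fun y : ℝ => 2 * Real.sqrt (1 - y)) (nhds 1)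
          (nhds (2 * Real.sqrt (1 - 1))) := by
        apply Filter.Tendsto.const_mul
        exact (Real.continuous_sqrt.tendsto _).comp
          ((continuous_const.sub continuous_id).tendsto 1)
      simpa using this.mono_left nhdsWithin_le_nhds
  · -- interior: plain continuity
    apply ContinuousAt.continuousWithinAt
    have hpos : (0 : ℝ) < 1 - x + x ^ 2 := by nlinarith
    apply ContinuousAt.mul
    · have hg : ContinuousAt (fun y : ℝ => 1 - y + y ^ 2) x := by fun_prop
      exact hg.log (ne_of_gt hpos)
    · apply ContinuousAt.div
      · exact Real.continuous_sqrt.continuousAt.comp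
          (ContinuousAt.div (by fun_prop) (by fun_prop) (ne_of_gt h0))
      · fun_prop
      · exact ne_of_gt (by linarith)

lemma G_intervalIntegrable {b c d : ℝ} (hb : b ≤ 1) (hc : c ∈ Set.Icc (0:ℝ) 1)
    (hd : d ∈ Set.Icc (0:ℝ) 1) :
    IntervalIntegrable (G b) MeasureTheory.volume c d := by
  apply ContinuousOn.intervalIntegrable
  apply (G_continuousOn hb).mono
  intro y hy
  rcases Set.mem_uIcc.mp hy with h | h
  · exact ⟨le_trans hc.1 h.1, le_trans h.2 hd.2⟩
  · exact ⟨le_trans hd.1 h.1, le_trans h.2 hc.2⟩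


/-! ### Evaluation of the integral at the symmetric point -/

lemma slit {r : ℝ} (hr0 : 0 < r) (hr1 : r < 1) {z : ℂ} (hz : ‖z‖ ≤ 1) :
    (1 + (r : ℂ) * z) ∈ Complex.slitPlane := by
  rw [Complex.mem_slitPlane_iff]
  left
  have h1 : |z.re| ≤ ‖z‖ := Complex.abs_re_le_norm z
  have h2 : (1 + (r : ℂ) * z).re = 1 + r * z.re := by
    simp [Complex.add_re, Complex.mul_re]
  rw [h2]
  have h3 := abs_le.mp (h1.trans hz)
  nlinarith

lemma cauchy_zero {r : ℝ} (hr0 : 0 < r) (hr1 : r < 1) :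
    ∫ u in (0:ℝ)..(2*π), Complex.log (1 + (r:ℂ) * Complex.exp (u * Complex.I)) = 0 := by
  set f : ℂ → ℂ := fun z => Complex.log (1 + (r:ℂ) * z) with hf
  have hdiff : ∀ z : ℂ, ‖z‖ ≤ 1 → DifferentiableAt ℂ f z := by
    intro z hz
    apply DifferentiableAt.clog
    · fun_prop
    · exact slit hr0 hr1 hz
  have hc : ContinuousOn f (Metric.closedBall 0 1) := by
    intro z hz
    rw [Metric.mem_closedBall, Complex.dist_eq, sub_zero] at hz
    exact (hdiff z hz).continuousAt.continuousWithinAt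
  have hC := Complex.circleIntegral_sub_inv_smul_of_differentiable_on_off_countable
      (R := 1) (c := 0) (w := 0) (f := f) (s := ∅) Set.countable_empty
      (Metric.mem_ball_self one_pos) hc
      (fun z hz => by
        rw [Set.diff_empty, Metric.mem_ball, Complex.dist_eq, sub_zero] at hz
        exact hdiff z hz.le)
  have hf0 : f 0 = 0 := by simp [hf]
  rw [hf0, smul_zero, circleIntegral] at hC
  have hcong : ∀ θ ∈ Set.uIcc (0:ℝ) (2*π),
      Complex.I * Complex.log (1 + (r:ℂ) * Complex.exp (θ * Complex.I))
      = deriv (circleMap 0 1) θ • ((circleMap 0 1 θ - 0)⁻¹ • f (circleMap 0 1 θ)) := by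
    intro θ _
    rw [deriv_circleMap]
    simp only [circleMap, smul_eq_mul, hf, Complex.ofReal_one, Complex.ofReal_zero]
    have hne : Complex.exp ((θ:ℂ) * Complex.I) ≠ 0 := Complex.exp_ne_zero _
    field_simp
    ring
  have h0 : ∫ θ in (0:ℝ)..(2*π),
      Complex.I * Complex.log (1 + (r:ℂ) * Complex.exp (θ * Complex.I)) = 0 := by
    rw [intervalIntegral.integral_congr hcong]
    exact hC
  rw [intervalIntegral.integral_const_mul] at h0
  exact (mul_eq_zero.mp h0).resolve_left Complex.I_ne_zero

lemma re_integral {r : ℝ} (hr0 : 0 < r) (hr1 : r < 1) :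
    ∫ u in (0:ℝ)..(2*π), Real.log (1 + r^2 + 2*r*Real.cos u) = 0 := by
  have hcont : Continuous (fun u : ℝ => Complex.log (1 + (r:ℂ) * Complex.exp (u * Complex.I))) := by
    apply Continuous.clog
    · fun_prop
    · intro u
      apply slit hr0 hr1
      rw [Complex.norm_exp_ofReal_mul_I]
  have h0 := cauchy_zero hr0 hr1
  have hint : IntervalIntegrable (fun u : ℝ => Complex.log (1 + (r:ℂ) * Complex.exp (u * Complex.I)))
      MeasureTheory.volume 0 (2*π) := hcont.intervalIntegrable 0 (2*π)
  have hre := Complex.reCLM.intervalIntegral_comp_comm hint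
  rw [h0] at hre
  simp only [Complex.reCLM_apply, map_zero] at hre
  have hkey : ∀ u : ℝ, Real.log (1 + r^2 + 2*r*Real.cos u)
      = 2 * (Complex.log (1 + (r:ℂ) * Complex.exp (u * Complex.I))).re := by
    intro u
    rw [Complex.log_re]
    have habs2 : (‖1 + (r:ℂ) * Complex.exp (u * Complex.I)‖)^2
        = 1 + r^2 + 2*r*Real.cos u := by
      rw [Complex.sq_norm, Complex.normSq_apply]
      simp only [Complex.add_re, Complex.add_im, Complex.mul_re, Complex.mul_im,
        Complex.one_re, Complex.one_im, Complex.ofReal_re, Complex.ofReal_im,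
        Complex.exp_ofReal_mul_I_re, Complex.exp_ofReal_mul_I_im]
      nlinarith [Real.sin_sq_add_cos_sq u]
    rw [← habs2, Real.log_pow]
    push_cast
    ring
  calc ∫ u in (0:ℝ)..(2*π), Real.log (1 + r^2 + 2*r*Real.cos u)
      = ∫ u in (0:ℝ)..(2*π),
          2 * (Complex.log (1 + (r:ℂ) * Complex.exp (u * Complex.I))).re :=
        intervalIntegral.integral_congr (fun u _ => hkey u)
    _ = 2 * ∫ u in (0:ℝ)..(2*π),
          (Complex.log (1 + (r:ℂ) * Complex.exp (u * Complex.I))).re :=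
        intervalIntegral.integral_const_mul 2 _
    _ = 0 := by rw [hre, mul_zero]

lemma log_seven_integral :
    ∫ u in (0:ℝ)..(2*π), Real.log (7 + Real.cos u)
      = -(2*π) * Real.log (14 - 8*Real.sqrt 3) := by
  have hs : Real.sqrt 3 ^ 2 = 3 := Real.sq_sqrt (by norm_num)
  have hs0 : 0 ≤ Real.sqrt 3 := Real.sqrt_nonneg 3
  set r : ℝ := 7 - 4*Real.sqrt 3 with hrdef
  have hr0 : 0 < r := by rw [hrdef]; nlinarith
  have hr1 : r < 1 := by rw [hrdef]; nlinarith
  have h14 : 1 + r^2 = 14*r := by rw [hrdef]; nlinarith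
  have key : ∀ u : ℝ, Real.log (7 + Real.cos u)
      = Real.log (1 + r^2 + 2*r*Real.cos u) - Real.log (2*r) := by
    intro u
    have hcos := Real.neg_one_le_cos u
    have hcos' := Real.cos_le_one u
    have h7 : (0:ℝ) < 7 + Real.cos u := by nlinarith
    have harg : 1 + r^2 + 2*r*Real.cos u = (7 + Real.cos u) * (2*r) := by
      linear_combination h14
    rw [harg, Real.log_mul (ne_of_gt h7) (by positivity)]
    ring
  have hcont1 : Continuous (fun u : ℝ => Real.log (1 + r^2 + 2*r*Real.cos u)) := by
    apply Continuous.log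
    · fun_prop
    · intro u
      have := Real.neg_one_le_cos u
      nlinarith [mul_pos (sub_pos.mpr hr1) (sub_pos.mpr hr1)]
  have h2r : 2*r = 14 - 8*Real.sqrt 3 := by rw [hrdef]; ring
  calc ∫ u in (0:ℝ)..(2*π), Real.log (7 + Real.cos u)
      = ∫ u in (0:ℝ)..(2*π),
          (Real.log (1 + r^2 + 2*r*Real.cos u) - Real.log (2*r)) :=
        intervalIntegral.integral_congr (fun u _ => key u)
    _ = (∫ u in (0:ℝ)..(2*π), Real.log (1 + r^2 + 2*r*Real.cos u))
        - ∫ u in (0:ℝ)..(2*π), Real.log (2*r) :=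
        intervalIntegral.integral_sub (hcont1.intervalIntegrable _ _)
          (_root_.intervalIntegrable_const)
    _ = 0 - (2*π - 0) * Real.log (2*r) := by
        rw [re_integral hr0 hr1, intervalIntegral.integral_const, smul_eq_mul]
    _ = -(2*π) * Real.log (14 - 8*Real.sqrt 3) := by rw [h2r]; ring

lemma trig_identity (t : ℝ) :
    (7 + Real.cos (4*t))/8 = 1 - Real.sin t ^ 2 + (Real.sin t ^ 2) ^ 2 := by
  have h1 : Real.cos (4*t) = 2 * Real.cos (2*t)^2 - 1 := by
    rw [show (4:ℝ)*t = 2*(2*t) by ring, Real.cos_two_mul]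
  have h2 : Real.cos (2*t) = 2 * Real.cos t^2 - 1 := Real.cos_two_mul t
  have h3 : Real.cos t^2 = 1 - Real.sin t^2 := Real.cos_sq' t
  rw [h1, h2, h3]; ring

lemma value_integral :
    ∫ x in (0:ℝ)..1, G 1 x
      = 2 * ∫ t in (0:ℝ)..(π/2), Real.log ((7 + Real.cos (4*t))/8) := by
  have hder : ∀ t ∈ Set.uIcc (0:ℝ) (π/2),
      HasDerivAt (fun t => Real.sin t ^ 2) (2 * Real.sin t * Real.cos t) t := by
    intro t _
    have h := (Real.hasDerivAt_sin t).pow 2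
    exact h.congr_deriv (by norm_num)
  have hcont : ContinuousOn (fun t : ℝ => 2 * Real.sin t * Real.cos t)
      (Set.uIcc 0 (π/2)) := by fun_prop
  have himg : ContinuousOn (G 1) ((fun t => Real.sin t ^ 2) '' Set.uIcc (0:ℝ) (π/2)) := by
    apply (G_continuousOn le_rfl).mono
    rintro _ ⟨t, _, rfl⟩
    refine ⟨sq_nonneg _, ?_⟩
    show Real.sin t ^ 2 ≤ 1
    nlinarith [Real.sin_le_one t, Real.neg_one_le_sin t]
  have hsub := intervalIntegral.integral_comp_smul_deriv' hder hcont himg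
  rw [Real.sin_zero, Real.sin_pi_div_two] at hsub
  norm_num at hsub
  rw [← hsub, ← intervalIntegral.integral_const_mul]
  apply intervalIntegral.integral_congr
  intro t ht
  rw [Set.uIcc_of_le (by positivity : (0:ℝ) ≤ π/2)] at ht
  obtain ⟨ht0, ht1⟩ := ht
  show (2 * Real.sin t * Real.cos t) • (G 1 ∘ fun t => Real.sin t ^ 2) t
      = 2 * Real.log ((7 + Real.cos (4*t))/8)
  rcases eq_or_lt_of_le ht0 with h0 | h0
  · rw [← h0]
    norm_num [G]
  rcases eq_or_lt_of_le ht1 with h1 | h1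
  · rw [h1]
    norm_num [G, Real.cos_pi_div_two, show (4:ℝ)*(π/2) = 2*π by ring, Real.cos_two_pi]
  · have hsin : 0 < Real.sin t := Real.sin_pos_of_pos_of_lt_pi h0 (by nlinarith [Real.pi_pos])
    have hcos : 0 < Real.cos t := Real.cos_pos_of_mem_Ioo ⟨by nlinarith [Real.pi_pos], h1⟩
    have hcs : (1:ℝ) - Real.sin t ^ 2 = Real.cos t ^ 2 := by
      have := Real.sin_sq_add_cos_sq t; linarith
    have hsq : Real.sqrt ((1 - Real.sin t ^ 2) / Real.sin t ^ 2)
        = Real.cos t / Real.sin t := by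
      rw [hcs, ← div_pow, Real.sqrt_sq (by positivity)]
    have harg : Real.log ((7 + Real.cos (4*t))/8)
        = Real.log (1 - Real.sin t ^ 2 + (Real.sin t ^ 2) ^ 2) := by
      rw [trig_identity t]
    rw [harg]
    show (2 * Real.sin t * Real.cos t) * G 1 (Real.sin t ^ 2) = _
    rw [G, hsq, hcs]
    field_simp

lemma value_half : nonlocalMagicDensity (1/2) = Real.log (8 - 4*Real.sqrt 3) := by
  have hs : Real.sqrt 3 ^ 2 = 3 := Real.sq_sqrt (by norm_num)
  have hs0 : 0 ≤ Real.sqrt 3 := Real.sqrt_nonneg 3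
  have hEq2 : nonlocalMagicDensity (1/2) = -(1/(2*π)) * ∫ x in (0:ℝ)..(1:ℝ), G 1 x := by
    unfold nonlocalMagicDensity G
    norm_num
  have hcont7 : Continuous (fun u : ℝ => Real.log (7 + Real.cos u)) := by
    apply Continuous.log
    · fun_prop
    · intro u; nlinarith [Real.neg_one_le_cos u]
  have hsplit : ∀ t : ℝ, Real.log ((7 + Real.cos (4*t))/8)
      = Real.log (7 + Real.cos (4*t)) - Real.log 8 := by
    intro t
    rw [Real.log_div (by nlinarith [Real.neg_one_le_cos (4*t)]) (by norm_num)]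
  have hcont74 : Continuous (fun t : ℝ => Real.log (7 + Real.cos (4*t))) := by
    have hg : Continuous (fun t : ℝ => (4:ℝ)*t) := by fun_prop
    exact hcont7.comp hg
  have e2 : ∫ t in (0:ℝ)..(π/2), Real.log ((7 + Real.cos (4*t))/8)
      = (∫ t in (0:ℝ)..(π/2), Real.log (7 + Real.cos (4*t))) - (π/2) * Real.log 8 := by
    simp only [hsplit]
    rw [intervalIntegral.integral_sub (hcont74.intervalIntegrable _ _)
      (_root_.intervalIntegrable_const), intervalIntegral.integral_const, smul_eq_mul]
    ring
  have hcomp : ∫ t in (0:ℝ)..(π/2), Real.log (7 + Real.cos (4*t))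
      = 4⁻¹ * ∫ u in (0:ℝ)..(2*π), Real.log (7 + Real.cos u) := by
    have h := intervalIntegral.integral_comp_mul_left (a := (0:ℝ)) (b := π/2) (c := 4)
      (fun u => Real.log (7 + Real.cos u)) (by norm_num)
    rw [show (4:ℝ)*0 = 0 by ring, show (4:ℝ)*(π/2) = 2*π by ring, smul_eq_mul] at h
    exact h
  have e4 : Real.log (14 - 8*Real.sqrt 3) + Real.log 8 = 2 * Real.log (8 - 4*Real.sqrt 3) := by
    rw [← Real.log_mul (by nlinarith) (by norm_num)]
    rw [show (14 - 8*Real.sqrt 3) * 8 = (8 - 4*Real.sqrt 3)^2 by nlinarith]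
    rw [Real.log_pow]
    push_cast
    ring
  rw [hEq2, value_integral, e2, hcomp, log_seven_integral]
  have hπ : (π:ℝ) ≠ 0 := Real.pi_ne_zero
  field_simp
  linear_combination 4 * e4

end NonlocalMagicAux

/-- The average nonlocal magic density of the Gaussian Haar ensemble is maximal at
the symmetric bipartition: 𝒥(ℓ) ≤ 𝒥(1/2) = log(8 − 4√3) for all ℓ ∈ [0,1]. -/
theorem nonlocal_magic_density_max_at_half :
    ∀ ℓ ∈ Set.Icc (0 : ℝ) 1,
      nonlocalMagicDensity ℓ ≤ nonlocalMagicDensity (1 / 2) ∧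
      nonlocalMagicDensity (1 / 2) = Real.log (8 - 4 * Real.sqrt 3) := by
  intro ℓ hℓ
  obtain ⟨hl0, hl1⟩ := hℓ
  constructor
  · -- inequality part
    open NonlocalMagicAux in
    set b := 4 * ℓ * (1 - ℓ) with hbdef
    have hb0 : 0 ≤ b := by rw [hbdef]; nlinarith
    have hb1 : b ≤ 1 := by rw [hbdef]; nlinarith [sq_nonneg (2 * ℓ - 1)]
    have hEq1 : nonlocalMagicDensity ℓ
        = -(1 / (2 * π)) * ∫ x in (0:ℝ)..b, NonlocalMagicAux.G b x := rfl
    have hEq2 : nonlocalMagicDensity (1/2)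
        = -(1 / (2 * π)) * ∫ x in (0:ℝ)..(1:ℝ), NonlocalMagicAux.G 1 x := by
      unfold nonlocalMagicDensity NonlocalMagicAux.G
      norm_num
    have h01 : (0:ℝ) ∈ Set.Icc (0:ℝ) 1 := by norm_num
    have hbI : b ∈ Set.Icc (0:ℝ) 1 := ⟨hb0, hb1⟩
    have h1I : (1:ℝ) ∈ Set.Icc (0:ℝ) 1 := by norm_num
    have i1 : IntervalIntegrable (NonlocalMagicAux.G 1) MeasureTheory.volume 0 b :=
      NonlocalMagicAux.G_intervalIntegrable le_rfl h01 hbI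
    have i2 : IntervalIntegrable (NonlocalMagicAux.G b) MeasureTheory.volume 0 b :=
      NonlocalMagicAux.G_intervalIntegrable hb1 h01 hbI
    have i3 : IntervalIntegrable (NonlocalMagicAux.G 1) MeasureTheory.volume b 1 :=
      NonlocalMagicAux.G_intervalIntegrable le_rfl hbI h1I
    have key1 : ∫ x in (0:ℝ)..b, NonlocalMagicAux.G 1 x
        ≤ ∫ x in (0:ℝ)..b, NonlocalMagicAux.G b x :=
      intervalIntegral.integral_mono_on hb0 i1 i2
        (fun x hx => NonlocalMagicAux.G_mono hb1 hx.1 (hx.2.trans hb1))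
    have key2 : ∫ x in b..1, NonlocalMagicAux.G 1 x ≤ 0 := by
      have h := intervalIntegral.integral_mono_on hb1 i3
        (_root_.intervalIntegrable_const (c := (0:ℝ)))
        (fun x hx => NonlocalMagicAux.G_nonpos (hb0.trans hx.1) hx.2)
      simpa using h
    have key3 : (∫ x in (0:ℝ)..1, NonlocalMagicAux.G 1 x)
        = (∫ x in (0:ℝ)..b, NonlocalMagicAux.G 1 x) + ∫ x in b..1, NonlocalMagicAux.G 1 x :=
      (intervalIntegral.integral_add_adjacent_intervals i1 i3).symm
    have hle : ∫ x in (0:ℝ)..1, NonlocalMagicAux.G 1 x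
        ≤ ∫ x in (0:ℝ)..b, NonlocalMagicAux.G b x := by linarith
    rw [hEq1, hEq2]
    have hc : 0 < 1 / (2 * π) := by positivity
    nlinarith [mul_le_mul_of_nonneg_left hle hc.le]
  · exact NonlocalMagicAux.value_half
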